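/- arXiv:2209.00811 — 2 statements merged into one kernel-verified Lean document; each statement's English description precedes it below -/
import Mathlib

section
/- The operator 𝒮 is invertible, with explicit inverse 𝒮′ = Σ_{i,j ∈ I} q^{−φ(i,j)} E_{ii} ⊗̂ E_{jj} − ξ Σ_{i,j ∈ I, i<j} (−1)^{p(i)} (E_{ji} + E_{−j,−i}) ⊗̂ E_{ij}; that is, 𝒮 ∘ 𝒮′ = 𝒮′ ∘ 𝒮 = id_{V ⊗ V}. -/
/-!
STATEMENT 1: 𝒮 is invertible with explicit inverse 𝒮′, i.e.
𝒮 ∘ 𝒮′ = 𝒮′ ∘ 𝒮 = id_{V ⊗ V}.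

We model V as the K-vector space with basis {v_i : i ∈ I_{N|N}} (identified
with functions on the index set), and linear operators on tensor powers of V
as matrices indexed by tuples of indices; composition of operators corresponds
to matrix multiplication.
-/

open scoped BigOperators

set_option synthInstance.maxHeartbeats 400000
set_option maxHeartbeats 1000000

noncomputable section

/-- The base field `K = ℂ(q)`. -/
abbrev K : Type := RatFunc ℂ

/-- The indeterminate `q ∈ ℂ(q)`. -/
noncomputable def q : K := RatFunc.X

/-- `ξ = q - q⁻¹`. -/
noncomputable def ξ : K := q - q⁻¹

/-- The index set `I_{N|N} = {-N, …, -1, 1, …, N} ⊆ ℤ`. -/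
def IdxSet (N : ℕ) : Finset ℤ := (Finset.Icc (-(N : ℤ)) N).filter (fun i => i ≠ 0)

/-- Elements of the index set `I_{N|N}`. -/
abbrev Idx (N : ℕ) := {i : ℤ // i ∈ IdxSet N}

/-- Negation on the index set. -/
def Idx.neg {N : ℕ} (i : Idx N) : Idx N :=
  ⟨-i.1, by
    have h := i.2
    simp only [IdxSet, Finset.mem_filter, Finset.mem_Icc] at h ⊢
    omega⟩

/-- Parity: `p(i) = 0` if `i > 0`, and `p(i) = 1` if `i < 0`. -/
def pty {N : ℕ} (i : Idx N) : ℕ := if 0 < i.1 then 0 else 1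

/-- `φ(i,j) = (-1)^{p(j)} (δ_{i,j} + δ_{i,-j})`. -/
def phi {N : ℕ} (i j : Idx N) : ℤ :=
  (if 0 < j.1 then 1 else -1) * ((if i = j then 1 else 0) + (if i.1 = -j.1 then 1 else 0))

/-- The matrix unit `E_{ij}`, i.e. the operator `E_{ij} v_k = δ_{jk} v_i`. -/
def E {N : ℕ} (i j : Idx N) : Matrix (Idx N) (Idx N) K := Matrix.single i j 1

/-- The super tensor product `A ⊗̂ B` of two operators on `V`, where `B` is
homogeneous of parity `pB`: on basis vectors
`(A ⊗̂ B)(v_a ⊗ v_b) = (-1)^{pB ⬝ p(a)} (A v_a) ⊗ (B v_b)`. -/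
def superT {N : ℕ} (A B : Matrix (Idx N) (Idx N) K) (pB : ℕ) :
    Matrix (Idx N × Idx N) (Idx N × Idx N) K :=
  Matrix.of fun rc cc => ((-1 : K) ^ (pB * pty cc.1)) * A rc.1 cc.1 * B rc.2 cc.2

/-- The operator `𝒮` on `V ⊗ V`:
`𝒮 = Σ_{i,j} q^{φ(i,j)} E_{ii} ⊗̂ E_{jj}
  + ξ Σ_{i<j} (-1)^{p(i)} (E_{ji} + E_{-j,-i}) ⊗̂ E_{ij}`. -/
def S (N : ℕ) : Matrix (Idx N × Idx N) (Idx N × Idx N) K :=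
  (∑ i : Idx N, ∑ j : Idx N, (q ^ phi i j) • superT (E i i) (E j j) 0)
  + ξ • ∑ i : Idx N, ∑ j : Idx N,
      (if i.1 < j.1 then
        ((-1 : K) ^ pty i) • superT (E j i + E j.neg i.neg) (E i j) (pty i + pty j)
      else 0)

/-- The operator `𝒮′` on `V ⊗ V`:
`𝒮′ = Σ_{i,j} q^{-φ(i,j)} E_{ii} ⊗̂ E_{jj}
  - ξ Σ_{i<j} (-1)^{p(i)} (E_{ji} + E_{-j,-i}) ⊗̂ E_{ij}`. -/
def S' (N : ℕ) : Matrix (Idx N × Idx N) (Idx N × Idx N) K :=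
  (∑ i : Idx N, ∑ j : Idx N, (q ^ (-phi i j)) • superT (E i i) (E j j) 0)
  - ξ • ∑ i : Idx N, ∑ j : Idx N,
      (if i.1 < j.1 then
        ((-1 : K) ^ pty i) • superT (E j i + E j.neg i.neg) (E i j) (pty i + pty j)
      else 0)


section Aux
variable {N : ℕ}

lemma Idx.ne_zero (i : Idx N) : i.1 ≠ 0 := by
  have h := i.2; simp only [IdxSet, Finset.mem_filter] at h; exact h.2

@[simp] lemma Idx.neg_val (i : Idx N) : (Idx.neg i).1 = -i.1 := rfl

@[simp] lemma Idx.neg_neg (i : Idx N) : i.neg.neg = i := by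
  apply Subtype.ext; simp [Idx.neg]

lemma Idx.neg_ne (i : Idx N) : i.neg ≠ i := by
  intro h
  have h2 := congrArg Subtype.val h
  simp only [Idx.neg_val] at h2
  exact Idx.ne_zero i (by omega)

lemma Idx.ne_neg (i : Idx N) : i ≠ i.neg := (Idx.neg_ne i).symm

lemma ite_app {α : Type*} (P : Prop) [Decidable P] (A B : Matrix (α × α) (α × α) K)
    (x z : α × α) : (if P then A else B) x z = if P then A x z else B x z := by
  split_ifs <;> rfl

lemma hq : (q : K) ≠ 0 := RatFunc.X_ne_zero

lemma phi_neg1 (a b : Idx N) (h : b.1 < a.1) : phi b a = - phi a b := by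
  have ha := Idx.ne_zero a
  have hb := Idx.ne_zero b
  simp only [phi, ← Subtype.coe_inj]
  split_ifs <;> omega

lemma phi_neg2 (a b : Idx N) (h : b.1 < -a.1) : phi b.neg a.neg = - phi a b := by
  have ha := Idx.ne_zero a
  have hb := Idx.ne_zero b
  simp only [phi, ← Subtype.coe_inj, Idx.neg_val]
  grind

/-- Diagonal part. -/
def Dm (N : ℕ) (s : ℤ) : Matrix (Idx N × Idx N) (Idx N × Idx N) K :=
  Matrix.of fun x z => if x = z then q ^ (s * phi x.1 x.2) else 0

/-- Off-diagonal part. -/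
def Tm (N : ℕ) : Matrix (Idx N × Idx N) (Idx N × Idx N) K :=
  Matrix.of fun x z =>
  (if z = (x.2, x.1) ∧ x.2.1 < x.1.1 then
      ((-1:K)) ^ (pty x.2 + (pty x.2 + pty x.1) * pty x.2) else 0)
  + (if z = (x.2.neg, x.1.neg) ∧ x.2.1 < -x.1.1 then
      ((-1:K)) ^ (pty x.2 + (pty x.2 + pty x.1.neg) * pty x.2.neg) else 0)

lemma Tpart_apply (N : ℕ) (x z : Idx N × Idx N) :
    (∑ i : Idx N, ∑ j : Idx N,
      (if i.1 < j.1 then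
        ((-1 : K) ^ pty i) • superT (E j i + E j.neg i.neg) (E i j) (pty i + pty j)
      else 0)) x z = Tm N x z := by
  rw [Matrix.sum_apply]
  simp only [Matrix.sum_apply]
  rw [Finset.sum_eq_single x.2]
  · rw [Finset.sum_eq_single z.2]
    · simp only [ite_app, Matrix.smul_apply, superT, E, Matrix.of_apply, Matrix.add_apply,
        Matrix.single, Matrix.zero_apply, smul_eq_mul, Tm, and_self, if_true, mul_one]
      obtain ⟨a, b⟩ := x
      obtain ⟨c, d⟩ := z
      simp only [Prod.mk.injEq]
      by_cases hA : d = a ∧ b = c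
      · obtain ⟨rfl, rfl⟩ := hA
        simp only [Idx.neg_ne, Idx.ne_neg, Idx.neg_neg, Idx.neg_val, neg_neg,
          and_false, false_and, if_false, and_self, and_true, true_and, if_true,
          add_zero, zero_add, mul_one]
        split_ifs with h <;> first | exact (pow_add (-1:K) _ _).symm | rfl
      · by_cases hB : d.neg = a ∧ b.neg = c
        · obtain ⟨rfl, rfl⟩ := hB
          simp only [Idx.neg_ne, Idx.ne_neg, Idx.neg_neg, Idx.neg_val, neg_neg,
            and_false, false_and, if_false, and_self, and_true, true_and, if_true,
            add_zero, zero_add, mul_one]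
          split_ifs with h <;> first | exact (pow_add (-1:K) _ _).symm | rfl
        · have h1 : ¬ ((c = b ∧ d = a) ∧ b.1 < a.1) := by
            rintro ⟨⟨hc, hd⟩, -⟩; exact hA ⟨hd, hc.symm⟩
          have h2 : ¬ ((c = b.neg ∧ d = a.neg) ∧ b.1 < -a.1) := by
            rintro ⟨⟨hc, hd⟩, -⟩
            exact hB ⟨by rw [hd, Idx.neg_neg], hc.symm⟩
          rw [if_neg h1, if_neg h2, if_neg hA, if_neg hB]
          simp
    · intro j _ hj
      simp [ite_app, Matrix.smul_apply, superT, E, Matrix.single, hj]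
    · simp
  · intro i _ hi
    apply Finset.sum_eq_zero; intro j _
    simp [ite_app, Matrix.smul_apply, superT, E, Matrix.single, hi]
  · simp

lemma Dpart_apply (N : ℕ) (s : ℤ) (x z : Idx N × Idx N) :
    (∑ i : Idx N, ∑ j : Idx N, (q ^ (s * phi i j)) • superT (E i i) (E j j) 0) x z
      = Dm N s x z := by
  simp only [Matrix.sum_apply, Matrix.smul_apply, superT, E, Matrix.single,
    Matrix.of_apply, smul_eq_mul, ite_and, Nat.zero_mul, pow_zero, one_mul, mul_ite,
    ite_mul, mul_zero, zero_mul, mul_one, Finset.sum_ite_eq, Finset.sum_ite_eq',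
    Finset.mem_univ, if_true, Finset.sum_ite_irrel, Finset.sum_const_zero, Dm]
  obtain ⟨a, b⟩ := x
  obtain ⟨c, d⟩ := z
  simp only [Prod.mk.injEq]
  split_ifs <;> simp_all

lemma S_eq (N : ℕ) : S N = Dm N 1 + ξ • Tm N := by
  have hd : ∀ i j : Idx N, (q ^ phi i j) = q ^ ((1:ℤ) * phi i j) := by
    intro i j; rw [one_mul]
  ext x z
  rw [S]
  simp only [hd]
  rw [Matrix.add_apply, Matrix.add_apply, Matrix.smul_apply, Matrix.smul_apply,
    Tpart_apply, Dpart_apply]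

lemma S'_eq (N : ℕ) : S' N = Dm N (-1) - ξ • Tm N := by
  have hd : ∀ i j : Idx N, (q ^ (- phi i j)) = q ^ ((-1:ℤ) * phi i j) := by
    intro i j; rw [neg_one_mul]
  ext x z
  rw [S']
  simp only [hd]
  rw [Matrix.sub_apply, Matrix.sub_apply, Matrix.smul_apply, Matrix.smul_apply,
    Tpart_apply, Dpart_apply]

lemma DD (N : ℕ) (s : ℤ) : Dm N s * Dm N (-s) = 1 := by
  ext x z
  rw [Matrix.mul_apply]
  simp only [Dm, Matrix.of_apply, ite_mul, zero_mul, Finset.sum_ite_eq, Finset.mem_univ,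
    if_true]
  rw [Matrix.one_apply]
  split_ifs with h
  · subst h
    rw [← zpow_add₀ hq]
    norm_num
  · rw [mul_zero]

lemma TD (N : ℕ) : Tm N * Dm N (-1) = Dm N 1 * Tm N := by
  ext x z
  rw [Matrix.mul_apply, Matrix.mul_apply]
  simp only [Dm, Matrix.of_apply, mul_ite, mul_zero, ite_mul, zero_mul,
    Finset.sum_ite_eq, Finset.sum_ite_eq', Finset.mem_univ, if_true]
  obtain ⟨a, b⟩ := x
  obtain ⟨c, d⟩ := z
  simp only [Tm, Matrix.of_apply, Prod.mk.injEq]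
  by_cases hA : (c = b ∧ d = a) ∧ b.1 < a.1
  · obtain ⟨⟨rfl, rfl⟩, hlt⟩ := hA
    have h2 : ¬ ((c = c.neg ∧ d = d.neg) ∧ c.1 < -d.1) := by
      rintro ⟨⟨h, -⟩, -⟩; exact Idx.ne_neg c h
    rw [if_pos ⟨⟨rfl, rfl⟩, hlt⟩, if_neg h2]
    have he : (-1 : ℤ) * phi c d = 1 * phi d c := by
      rw [phi_neg1 d c hlt]; ring
    rw [he]; ring
  · by_cases hB : (c = b.neg ∧ d = a.neg) ∧ b.1 < -a.1
    · obtain ⟨⟨rfl, rfl⟩, hlt⟩ := hB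
      rw [if_neg hA, if_pos ⟨⟨rfl, rfl⟩, hlt⟩]
      have he : (-1 : ℤ) * phi b.neg a.neg = 1 * phi a b := by
        rw [phi_neg2 a b hlt]; ring
      rw [he]; ring
    · rw [if_neg hA, if_neg hB]
      simp

lemma DT (N : ℕ) : Dm N (-1) * Tm N = Tm N * Dm N 1 := by
  ext x z
  rw [Matrix.mul_apply, Matrix.mul_apply]
  simp only [Dm, Matrix.of_apply, mul_ite, mul_zero, ite_mul, zero_mul,
    Finset.sum_ite_eq, Finset.sum_ite_eq', Finset.mem_univ, if_true]
  obtain ⟨a, b⟩ := x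
  obtain ⟨c, d⟩ := z
  simp only [Tm, Matrix.of_apply, Prod.mk.injEq]
  by_cases hA : (c = b ∧ d = a) ∧ b.1 < a.1
  · obtain ⟨⟨rfl, rfl⟩, hlt⟩ := hA
    have h2 : ¬ ((c = c.neg ∧ d = d.neg) ∧ c.1 < -d.1) := by
      rintro ⟨⟨h, -⟩, -⟩; exact Idx.ne_neg c h
    rw [if_pos ⟨⟨rfl, rfl⟩, hlt⟩, if_neg h2]
    have he : (-1 : ℤ) * phi d c = 1 * phi c d := by
      rw [phi_neg1 d c hlt]; ring
    rw [he]; ring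
  · by_cases hB : (c = b.neg ∧ d = a.neg) ∧ b.1 < -a.1
    · obtain ⟨⟨rfl, rfl⟩, hlt⟩ := hB
      rw [if_neg hA, if_pos ⟨⟨rfl, rfl⟩, hlt⟩]
      have he : (-1 : ℤ) * phi a b = 1 * phi b.neg a.neg := by
        rw [phi_neg2 a b hlt]; ring
      rw [he]; ring
    · rw [if_neg hA, if_neg hB]
      simp

lemma TT (N : ℕ) : Tm N * Tm N = 0 := by
  ext x z
  rw [Matrix.mul_apply]
  obtain ⟨a, b⟩ := x
  have ha := Idx.ne_zero a
  have hb := Idx.ne_zero b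
  have step : ∀ y : Idx N × Idx N, Tm N (a, b) y * Tm N y z =
      (if y = (b, a) then
        (if b.1 < a.1 then ((-1:K)) ^ (pty b + (pty b + pty a) * pty b) * Tm N y z else 0)
       else 0)
      + (if y = (b.neg, a.neg) then
        (if b.1 < -a.1 then
          ((-1:K)) ^ (pty b + (pty b + pty a.neg) * pty b.neg) * Tm N y z else 0)
       else 0) := by
    intro y
    simp only [Tm, Matrix.of_apply, ite_and, add_mul, ite_mul, zero_mul]
  rw [Finset.sum_congr rfl (fun y _ => step y), Finset.sum_add_distrib,
    Finset.sum_ite_eq', Finset.sum_ite_eq']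
  simp only [Finset.mem_univ, if_true, Matrix.zero_apply]
  by_cases h1 : b.1 < a.1 <;> by_cases h2 : b.1 < -a.1
  · rw [if_pos h1, if_pos h2]
    simp only [Tm, Matrix.of_apply, Idx.neg_neg, Idx.neg_val, neg_neg]
    rw [if_neg (by rintro ⟨-, h⟩; omega : ¬ (z = (a, b) ∧ a.1 < b.1)),
      if_neg (by rintro ⟨-, h⟩; omega : ¬ (z = (a, b) ∧ -a.1 < b.1))]
    by_cases hz : z = (a.neg, b.neg)
    · subst hz
      simp only [show -a.1 < -b.1 by omega, show a.1 < -b.1 by omega, and_self, if_true]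
      have hbneg : ¬ ((0:ℤ) < b.1) := by omega
      rcases lt_or_gt_of_ne ha with ha' | ha'
      · have k1 : ¬ ((0:ℤ) < a.1) := by omega
        have k2 : (0:ℤ) < -a.1 := by omega
        have k3 : (0:ℤ) < -b.1 := by omega
        simp only [pty, Idx.neg_val, k1, k2, k3, hbneg, if_true, if_false]
        norm_num
      · have k1 : (0:ℤ) < a.1 := ha'
        have k2 : ¬ ((0:ℤ) < -a.1) := by omega
        have k3 : (0:ℤ) < -b.1 := by omega
        simp only [pty, Idx.neg_val, k1, k2, k3, hbneg, if_true, if_false]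
        norm_num
    · simp only [if_neg (by rintro ⟨h, -⟩; exact hz h : ¬ (z = (a.neg, b.neg) ∧ a.1 < -b.1)),
        if_neg (by rintro ⟨h, -⟩; exact hz h : ¬ (z = (a.neg, b.neg) ∧ -a.1 < -b.1))]
      simp [hz]
  · rw [if_pos h1, if_neg h2]
    simp only [Tm, Matrix.of_apply, Idx.neg_neg, Idx.neg_val, neg_neg]
    rw [if_neg (by rintro ⟨-, h⟩; omega : ¬ (z = (a, b) ∧ a.1 < b.1)),
      if_neg (by rintro ⟨-, h⟩; omega : ¬ (z = (a.neg, b.neg) ∧ a.1 < -b.1))]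
    simp
  · rw [if_neg h1, if_pos h2]
    simp only [Tm, Matrix.of_apply, Idx.neg_neg, Idx.neg_val, neg_neg]
    simp only [if_neg (by rintro ⟨-, h⟩; omega : ¬ (z = (a.neg, b.neg) ∧ -a.1 < -b.1)),
      if_neg (by rintro ⟨-, h⟩; omega : ¬ (z = (a, b) ∧ -a.1 < b.1))]
    simp
    intro _; show a.1 ≤ b.1; omega
  · rw [if_neg h1, if_neg h2]
    simp

end Aux

/-- The operator `𝒮` is invertible, with explicit inverse `𝒮′`:
`𝒮 ∘ 𝒮′ = 𝒮′ ∘ 𝒮 = id_{V ⊗ V}`. -/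
theorem S_mul_S'_eq_one (N : ℕ) (hN : 0 < N) :
    S N * S' N = 1 ∧ S' N * S N = 1 := by
  have e1 := S_eq N
  have e2 := S'_eq N
  have hdd1 := DD N 1
  have hdd2 := DD N (-1)
  have htt := TT N
  have htd := TD N
  have hdt := DT N
  constructor
  · rw [e1, e2, mul_sub, add_mul, add_mul, Matrix.smul_mul, Matrix.smul_mul,
      Matrix.mul_smul, Matrix.mul_smul, htd, htt, hdd1, smul_zero, smul_zero]
    abel
  · rw [e2, e1, sub_mul, mul_add, mul_add, Matrix.smul_mul, Matrix.smul_mul,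
      Matrix.mul_smul, Matrix.mul_smul, hdt, htt, smul_zero, smul_zero]
    norm_num at hdd2 ⊢
    rw [hdd2]

end
end

section
/- Let J ∈ End(V) be the odd operator J = Σ_{a ∈ I} (−1)^{p(a)} E_{−a,a}. Then (J ⊗̂ id_V) ∘ 𝒮 = 𝒮 ∘ (J ⊗̂ id_V) as operators on V ⊗ V (note that J ⊗̂ id_V acts simply by v_a ⊗ v_b ↦ (J v_a) ⊗ v_b). -/
/-!
STATEMENT 3: For the odd operator J = Σ_a (-1)^{p(a)} E_{-a,a} on V, we have
(J ⊗̂ id_V) ∘ 𝒮 = 𝒮 ∘ (J ⊗̂ id_V) as operators on V ⊗ V.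

We model V as the K-vector space with basis {v_i : i ∈ I_{N|N}} (identified
with functions on the index set), and linear operators on tensor powers of V
as matrices indexed by tuples of indices; composition of operators corresponds
to matrix multiplication.
-/

open scoped BigOperators

set_option synthInstance.maxHeartbeats 400000
set_option maxHeartbeats 1000000

noncomputable section

/-- The odd operator `J = Σ_{a ∈ I} (-1)^{p(a)} E_{-a,a}` on `V`. -/
def J (N : ℕ) : Matrix (Idx N) (Idx N) K :=
  ∑ a : Idx N, ((-1 : K) ^ pty a) • E a.neg a


namespace Idx
variable {N : ℕ}

lemma val_ne_zero (i : Idx N) : i.1 ≠ 0 := by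
  have h := i.2
  simp only [IdxSet, Finset.mem_filter] at h
  exact h.2

@[simp] lemma neg_val_s3 (i : Idx N) : i.neg.1 = -i.1 := rfl

@[simp] lemma neg_neg_s3 (i : Idx N) : i.neg.neg = i := by
  apply Subtype.ext; simp [Idx.neg]

@[simp] lemma neg_inj {i j : Idx N} : i.neg = j.neg ↔ i = j := by
  constructor
  · intro h; have := congrArg Idx.neg h; simpa using this
  · rintro rfl; rfl

@[simp] lemma neg_eq_iff {i j : Idx N} : i.neg = j ↔ i = j.neg := by
  constructor <;> rintro rfl <;> simp

@[simp] lemma neg_ne_s3 (i : Idx N) : i.neg ≠ i := by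
  intro h
  have h2 := congrArg Subtype.val h
  simp only [neg_val_s3] at h2
  exact i.val_ne_zero (by omega)

@[simp] lemma ne_neg_s3 (i : Idx N) : i ≠ i.neg := (neg_ne_s3 i).symm

end Idx

lemma pty_neg {N : ℕ} (i : Idx N) : pty i.neg = 1 - pty i := by
  have := i.val_ne_zero
  simp only [pty, Idx.neg]
  by_cases h1 : 0 < i.1 <;> by_cases h2 : 0 < -i.1 <;> simp only [h1, h2, if_true, if_false] <;> omega

lemma pty_cases {N : ℕ} (i : Idx N) : pty i = 0 ∨ pty i = 1 := by
  unfold pty; split_ifs <;> simp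

lemma E_apply {N : ℕ} (i j a b : Idx N) :
    E i j a b = if i = a ∧ j = b then 1 else 0 := rfl

lemma J_apply {N : ℕ} (u v : Idx N) :
    J N u v = if u = v.neg then (-1 : K) ^ pty v else 0 := by
  unfold J
  rw [Matrix.sum_apply, Finset.sum_eq_single v]
  · simp [Matrix.smul_apply, E_apply, eq_comm]
  · intro a _ ha
    simp [Matrix.smul_apply, E_apply, ha]
  · simp

lemma T_apply {N : ℕ} (r c : Idx N × Idx N) :
    superT (J N) 1 0 r c =
      (if r.1 = c.1.neg then (-1 : K) ^ pty c.1 else 0) * (if r.2 = c.2 then 1 else 0) := by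
  simp [superT, J_apply, Matrix.one_apply]

lemma T_mul_apply {N : ℕ} (M : Matrix (Idx N × Idx N) (Idx N × Idx N) K) (a b c d : Idx N) :
    (superT (J N) 1 0 * M) (a, b) (c, d)
      = (-1 : K) ^ pty a.neg * M (a.neg, b) (c, d) := by
  rw [Matrix.mul_apply, Finset.sum_eq_single ((a.neg, b) : Idx N × Idx N)]
  · simp [T_apply]
  · rintro ⟨x, y⟩ _ hxy
    rw [T_apply]
    by_cases h1 : a = x.neg
    · by_cases h2 : b = y
      · exfalso
        apply hxy
        have : x = a.neg := by rw [h1]; simp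
        rw [this, h2]
      · simp [h2]
    · simp [h1]
  · simp

lemma mul_T_apply {N : ℕ} (M : Matrix (Idx N × Idx N) (Idx N × Idx N) K) (a b c d : Idx N) :
    (M * superT (J N) 1 0) (a, b) (c, d)
      = M (a, b) (c.neg, d) * (-1 : K) ^ pty c := by
  rw [Matrix.mul_apply, Finset.sum_eq_single ((c.neg, d) : Idx N × Idx N)]
  · simp [T_apply]
  · rintro ⟨x, y⟩ _ hxy
    rw [T_apply]
    by_cases h1 : x = c.neg
    · by_cases h2 : y = d
      · exfalso; apply hxy; rw [h1, h2]
      · simp [h2]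
    · simp [h1]
  · simp

lemma S_apply {N : ℕ} (a b c d : Idx N) :
    S N (a, b) (c, d) =
      (if a = c ∧ b = d then q ^ phi a b else 0)
      + ξ * (if b.1 < d.1 then
          (-1 : K) ^ pty b * (-1 : K) ^ ((pty b + pty d) * pty c) *
            ((if d = a ∧ b = c then 1 else 0) + (if d.neg = a ∧ b.neg = c then 1 else 0))
        else 0) := by
  unfold S
  rw [Matrix.add_apply, Matrix.smul_apply]
  congr 1
  · rw [Matrix.sum_apply, Finset.sum_eq_single a]
    · rw [Matrix.sum_apply, Finset.sum_eq_single b]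
      · simp only [Matrix.smul_apply, superT, Matrix.of_apply, E_apply, Nat.zero_mul,
          pow_zero, one_mul, smul_eq_mul]
        by_cases h1 : a = c <;> by_cases h2 : b = d <;> simp [h1, h2]
      · intro j _ hj
        simp [Matrix.smul_apply, superT, E_apply, hj]
      · simp
    · intro i _ hi
      rw [Matrix.sum_apply]
      apply Finset.sum_eq_zero
      intro j _
      simp [Matrix.smul_apply, superT, E_apply, hi]
    · simp
  · rw [smul_eq_mul]
    congr 1
    rw [Matrix.sum_apply, Finset.sum_eq_single b]
    · rw [Matrix.sum_apply, Finset.sum_eq_single d]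
      · by_cases hbd : b.1 < d.1
        · simp only [hbd, if_true, Matrix.smul_apply, superT, Matrix.of_apply,
            Matrix.add_apply, E_apply, smul_eq_mul]
          ring_nf
          simp
        · simp [hbd]
      · intro j _ hj
        simp only [ite_apply, Matrix.zero_apply, Matrix.smul_apply, superT,
          Matrix.of_apply, E_apply, smul_eq_mul]
        split_ifs with h <;> simp [hj]
      · simp
    · intro i _ hi
      rw [Matrix.sum_apply]
      apply Finset.sum_eq_zero
      intro j _
      simp only [ite_apply, Matrix.zero_apply, Matrix.smul_apply, superT,
        Matrix.of_apply, E_apply, smul_eq_mul]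
      split_ifs with h <;> simp [hi]
    · simp

lemma phi_neg_left {N : ℕ} (i j : Idx N) : phi i.neg j = phi i j := by
  unfold phi
  have e1 : (if i.neg = j then (1 : ℤ) else 0) = (if i.1 = -j.1 then 1 else 0) := by
    by_cases h : i.1 = -j.1
    · have h' : i.neg = j := by apply Subtype.ext; simp [h]
      simp [h, h']
    · have h' : i.neg ≠ j := by intro hh; apply h; rw [← hh]; simp
      simp [h, h']
  have e2 : (if i.neg.1 = -j.1 then (1 : ℤ) else 0) = (if i = j then 1 else 0) := by
    by_cases h : i = j
    · simp [h]
    · have h' : i.neg.1 ≠ -j.1 := by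
        intro hh; apply h; apply Subtype.ext; simp only [Idx.neg_val_s3] at hh; omega
      simp only [h', if_false, if_neg h]
  rw [e1, e2]
  ring

lemma split_key (s1 s2 X1 X2 Y1 Y2 : K) (h1 : s1 * X1 = X2 * s2)
    (h2 : s1 * Y1 = Y2 * s2) : s1 * (X1 + ξ * Y1) = (X2 + ξ * Y2) * s2 := by
  rw [mul_add, add_mul, h1, mul_left_comm, h2, mul_assoc]

/-- `(J ⊗̂ id_V) ∘ 𝒮 = 𝒮 ∘ (J ⊗̂ id_V)` as operators on `V ⊗ V`.
Here `J ⊗̂ id_V = superT (J N) 1 0` since the identity operator is even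
(of parity 0), so that `(J ⊗̂ id_V)(v_a ⊗ v_b) = (J v_a) ⊗ v_b`. -/
theorem J_tensor_id_commutes_with_S (N : ℕ) (hN : 0 < N) :
    superT (J N) 1 0 * S N = S N * superT (J N) 1 0 := by
  ext x y
  obtain ⟨a, b⟩ := x
  obtain ⟨c, d⟩ := y
  rw [T_mul_apply, mul_T_apply, S_apply, S_apply]
  apply split_key
  · by_cases h : a = c.neg
    · subst h
      simp only [Idx.neg_neg_s3, phi_neg_left]
      by_cases h2 : b = d <;> simp [h2, mul_comm]
    · have h' : ¬ (a.neg = c) := by simpa using h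
      simp [h, h']
  · by_cases hbd : b.1 < d.1
    · simp only [hbd, if_true]
      by_cases hP : a = d.neg ∧ c = b
      · obtain ⟨rfl, rfl⟩ := hP
        simp only [Idx.neg_neg_s3, Idx.neg_ne_s3, Idx.ne_neg_s3, and_true, and_false, eq_self_iff_true,
          if_true, if_false, true_and, false_and, and_self]
        rcases pty_cases c with hb | hb <;> rcases pty_cases d with hd | hd <;>
          simp [pty_neg, hb, hd] <;> ring_nf <;> norm_num
      · by_cases hQ : a = d ∧ c = b.neg
        · obtain ⟨rfl, rfl⟩ := hQ
          simp only [Idx.neg_neg_s3, Idx.neg_ne_s3, Idx.ne_neg_s3, and_true, and_false, eq_self_iff_true,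
            if_true, if_false, true_and, false_and, and_self]
          rcases pty_cases b with hb | hb <;> rcases pty_cases a with hd | hd <;>
            simp [pty_neg, hb, hd] <;> ring_nf <;> norm_num
        · have n1 : ¬(d = a.neg ∧ b = c) := by
            rintro ⟨h1, h2⟩; exact hP ⟨by rw [h1]; simp, h2.symm⟩
          have n2 : ¬(d.neg = a.neg ∧ b.neg = c) := by
            rintro ⟨h1, h2⟩; exact hQ ⟨(Idx.neg_inj.mp h1).symm, h2.symm⟩
          have n3 : ¬(d = a ∧ b = c.neg) := by
            rintro ⟨h1, h2⟩; exact hQ ⟨h1.symm, by rw [h2]; simp⟩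
          have n4 : ¬(d.neg = a ∧ b.neg = c.neg) := by
            rintro ⟨h1, h2⟩; exact hP ⟨h1.symm, (Idx.neg_inj.mp h2).symm⟩
          simp [n1, n2, n3, n4]
    · simp [hbd]

end
end
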